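/- Assume: Z is a real normed space, S ⊆ Z is a closed convex cone with int S ≠ ∅; 𝒰 is a compact subset of a real topological vector space; for each x ∈ X the map u ↦ G_u(x) is S⁺-upper semicontinuous, i.e. the set {(λ,u,r) ∈ S⁺×𝒰×ℝ : λ(G_u(x)) ≥ r} is closed in Z*(weak*) × 𝒰 × ℝ; and the Slater-type condition (C₀) holds: for every u ∈ 𝒰 there exists x_u ∈ X with G_u(x_u) ∈ −int S. Then the robust moment cone 𝓜₀ is a closed subset of X*×ℝ (weak*-topology on X* times the usual topology on ℝ). -/

import Mathlib

open Pointwise Topology Filter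

/-- Proposition 2.2(ii): if Z is normed, 𝒰 is compact, u ↦ G_u(x) is S⁺-usc for each x,
and the Slater-type condition (C₀) holds, then the robust moment cone 𝓜₀ is closed. -/
theorem stmt5
    {X Z W : Type*}
    [AddCommGroup X] [Module ℝ X] [TopologicalSpace X] [IsTopologicalAddGroup X]
    [ContinuousSMul ℝ X] [LocallyConvexSpace ℝ X] [T2Space X]
    [NormedAddCommGroup Z] [NormedSpace ℝ Z]
    [AddCommGroup W] [Module ℝ W] [TopologicalSpace W] [IsTopologicalAddGroup W]
    [ContinuousSMul ℝ W]
    (S : Set Z) (hS_ne : S.Nonempty) (hS_closed : IsClosed S) (hS_conv : Convex ℝ S)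
    (hS_cone : ∀ r : ℝ, 0 ≤ r → ∀ z ∈ S, r • z ∈ S)
    (hS_int : (interior S).Nonempty)
    (U : Set W) (hU : U.Nonempty) (hU_cpt : IsCompact U) (G : W → X → Z)
    (hG_conv : ∀ u ∈ U, Convex ℝ {p : X × Z | p.2 - G u p.1 ∈ S})
    (hG_closed : ∀ u ∈ U, IsClosed {p : X × Z | p.2 - G u p.1 ∈ S})
    (husc : ∀ x : X, IsClosed {p : WeakDual ℝ Z × U × ℝ |
      (∀ z ∈ S, 0 ≤ p.1 z) ∧ p.2.2 ≤ p.1 (G p.2.1.1 x)})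
    (hSlater : ∀ u ∈ U, ∃ x : X, G u x ∈ -interior S) :
    IsClosed (⋃ u ∈ U, ⋃ l ∈ {l : WeakDual ℝ Z | ∀ z ∈ S, 0 ≤ l z},
      {q : WeakDual ℝ X × ℝ | ∀ x : X, q.1 x - l (G u x) ≤ q.2}) := by
  set Sp : Set (WeakDual ℝ Z) := {l : WeakDual ℝ Z | ∀ z ∈ S, 0 ≤ l z} with hSp
  set M : Set (WeakDual ℝ X × ℝ) :=
    ⋃ u ∈ U, ⋃ l ∈ Sp, {q : WeakDual ℝ X × ℝ | ∀ x : X, q.1 x - l (G u x) ≤ q.2} with hM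
  have hmemM : ∀ p : WeakDual ℝ X × ℝ, p ∈ M ↔
      ∃ u, u ∈ U ∧ ∃ l, l ∈ Sp ∧ ∀ x : X, p.1 x - l (G u x) ≤ p.2 := by
    intro p
    simp only [hM, Set.mem_iUnion, Set.mem_setOf_eq, exists_prop]
  apply isClosed_of_closure_subset
  intro q hq
  obtain ⟨F, hMF, hFq⟩ := mem_closure_iff_ultrafilter.mp hq
  -- interior point and radius
  obtain ⟨s₀, hs₀⟩ := hS_int
  obtain ⟨ε₀, hε₀pos, hball⟩ := Metric.isOpen_iff.mp isOpen_interior s₀ hs₀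
  set ε := ε₀ / 2 with hε
  have hεpos : 0 < ε := by positivity
  have hcball : ∀ z : Z, ‖z‖ ≤ ε → s₀ + z ∈ S := by
    intro z hz
    refine interior_subset (hball ?_)
    simp only [Metric.mem_ball, dist_eq_norm, add_sub_cancel_left]
    linarith
  have hs₀S : s₀ ∈ S := by simpa using hcball 0 (by simp [hεpos.le])
  -- norm estimate for positive functionals
  have hnorm : ∀ l : WeakDual ℝ Z, l ∈ Sp → ∀ z : Z, |l z| ≤ ε⁻¹ * l s₀ * ‖z‖ := by
    intro l hl z
    by_cases hz : z = 0
    · simp [hz]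
    have hzpos : 0 < ‖z‖ := norm_pos_iff.mpr hz
    have hs₀pos : 0 ≤ l s₀ := hl s₀ hs₀S
    set w : Z := (ε / ‖z‖) • z with hw
    have hwnorm : ‖w‖ = ε := by
      rw [hw, norm_smul, Real.norm_eq_abs, abs_of_pos (by positivity)]
      field_simp
    have h1 : 0 ≤ l (s₀ + w) := hl _ (hcball w hwnorm.le)
    have h2 : 0 ≤ l (s₀ + -w) := hl _ (hcball (-w) (by rw [norm_neg, hwnorm]))
    rw [map_add] at h1
    rw [map_add, map_neg] at h2
    have habs : |l w| ≤ l s₀ := abs_le.mpr ⟨by linarith, by linarith⟩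
    have hlw : l w = (ε / ‖z‖) * l z := by rw [hw, map_smul, smul_eq_mul]
    have habs2 : |l w| = (ε / ‖z‖) * |l z| := by
      rw [hlw, abs_mul, abs_of_pos (by positivity)]
    have key2 : ε * |l z| ≤ l s₀ * ‖z‖ := by
      rw [habs2] at habs
      have := mul_le_mul_of_nonneg_right habs hzpos.le
      calc ε * |l z| = ε / ‖z‖ * |l z| * ‖z‖ := by field_simp
        _ ≤ l s₀ * ‖z‖ := this
    calc |l z| = ε * |l z| / ε := by field_simp
      _ ≤ l s₀ * ‖z‖ / ε := by gcongr
      _ = ε⁻¹ * l s₀ * ‖z‖ := by ring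
  -- choice of parameters
  have key : ∀ p : WeakDual ℝ X × ℝ, ∃ (u : W) (l : WeakDual ℝ Z), u ∈ U ∧
      (p ∈ M → (l ∈ Sp ∧ ∀ x : X, p.1 x - l (G u x) ≤ p.2)) := by
    intro p
    by_cases hp : p ∈ M
    · obtain ⟨u, hu, l, hl, hpl⟩ := (hmemM p).mp hp
      exact ⟨u, l, hu, fun _ => ⟨hl, hpl⟩⟩
    · exact ⟨hU.choose, 0, hU.choose_spec, fun h => absurd h hp⟩
  choose κ Λ hκ hΛ using key
  set t : (WeakDual ℝ X × ℝ) → ℝ := fun p => max 1 (Λ p s₀) with ht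
  have ht1 : ∀ p, 1 ≤ t p := fun p => le_max_left _ _
  have htpos : ∀ p, 0 < t p := fun p => lt_of_lt_of_le one_pos (ht1 p)
  set μ : (WeakDual ℝ X × ℝ) → WeakDual ℝ Z := fun p => (t p)⁻¹ • Λ p with hμ
  have hμapp : ∀ p z, μ p z = (t p)⁻¹ * Λ p z := fun p z => rfl
  have hΛapp : ∀ p z, Λ p z = t p * μ p z := by
    intro p z
    rw [hμapp]
    rw [← mul_assoc, mul_inv_cancel₀ (htpos p).ne', one_mul]
  have hμSp : ∀ p ∈ M, μ p ∈ Sp := by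
    intro p hp z hz
    rw [hμapp]
    exact mul_nonneg (inv_nonneg.mpr (htpos p).le) ((hΛ p hp).1 z hz)
  have hμball : ∀ p ∈ M, μ p ∈
      (WeakDual.toStrongDual ⁻¹' Metric.closedBall 0 ε⁻¹ : Set (WeakDual ℝ Z)) := by
    intro p hp
    simp only [Set.mem_preimage, Metric.mem_closedBall, dist_zero_right]
    apply ContinuousLinearMap.opNorm_le_bound _ (inv_nonneg.mpr hεpos.le)
    intro z
    have hb := hnorm (Λ p) (hΛ p hp).1 z
    have hfrac : (t p)⁻¹ * Λ p s₀ ≤ 1 := by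
      rw [inv_mul_le_iff₀ (htpos p), mul_one]
      exact le_max_right _ _
    have : ‖(μ p) z‖ = (t p)⁻¹ * |Λ p z| := by
      rw [hμapp, Real.norm_eq_abs, abs_mul, abs_of_pos (by positivity)]
    have hgoal : ‖(μ p) z‖ ≤ ε⁻¹ * ‖z‖ := by
      rw [this]
      have h1 : (t p)⁻¹ * |Λ p z| ≤ (t p)⁻¹ * (ε⁻¹ * Λ p s₀ * ‖z‖) :=
        mul_le_mul_of_nonneg_left hb (inv_nonneg.mpr (htpos p).le)
      have h2 : (t p)⁻¹ * (ε⁻¹ * Λ p s₀ * ‖z‖) = ε⁻¹ * ((t p)⁻¹ * Λ p s₀) * ‖z‖ := by ring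
      have h3 : ε⁻¹ * ((t p)⁻¹ * Λ p s₀) * ‖z‖ ≤ ε⁻¹ * 1 * ‖z‖ := by
        have hΛs₀ : 0 ≤ Λ p s₀ := (hΛ p hp).1 s₀ hs₀S
        have hfrac0 : 0 ≤ (t p)⁻¹ * Λ p s₀ := mul_nonneg (inv_nonneg.mpr (htpos p).le) hΛs₀
        gcongr
      calc (t p)⁻¹ * |Λ p z| ≤ ε⁻¹ * ((t p)⁻¹ * Λ p s₀) * ‖z‖ := by rw [← h2]; exact h1
        _ ≤ ε⁻¹ * 1 * ‖z‖ := h3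
        _ = ε⁻¹ * ‖z‖ := by ring
    exact hgoal
  -- limit of the normalized multipliers (Banach–Alaoglu)
  have hcptB : IsCompact
      (WeakDual.toStrongDual ⁻¹' Metric.closedBall 0 ε⁻¹ : Set (WeakDual ℝ Z)) :=
    WeakDual.isCompact_closedBall (𝕜 := ℝ) 0 ε⁻¹
  obtain ⟨μ₀, _hμ₀B, hμ₀⟩ := hcptB.ultrafilter_le_nhds (F.map μ)
    (le_principal_iff.mpr (Filter.mem_map.mpr (Filter.mem_of_superset hMF hμball)))
  have hμt : Filter.Tendsto μ F (𝓝 μ₀) := by rwa [Ultrafilter.coe_map] at hμ₀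
  -- limit of the uncertainty parameters
  obtain ⟨u₀, hu₀U, hu₀⟩ := hU_cpt.ultrafilter_le_nhds (F.map κ)
    (le_principal_iff.mpr (Filter.mem_map.mpr (Filter.univ_mem' hκ)))
  have hκt : Filter.Tendsto κ F (𝓝 u₀) := by rwa [Ultrafilter.coe_map] at hu₀
  set κ' : (WeakDual ℝ X × ℝ) → U := fun p => ⟨κ p, hκ p⟩ with hκ'def
  have hκ't : Filter.Tendsto κ' F (𝓝 (⟨u₀, hu₀U⟩ : U)) := tendsto_subtype_rng.mpr hκt
  -- evaluation convergence
  have hq1 : ∀ x : X, Filter.Tendsto (fun p : WeakDual ℝ X × ℝ => p.1 x - p.2) F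
      (𝓝 (q.1 x - q.2)) := by
    intro x
    have hcont : Continuous fun p : WeakDual ℝ X × ℝ => p.1 x - p.2 :=
      ((WeakDual.eval_continuous x).comp continuous_fst).sub continuous_snd
    exact (hcont.tendsto q).mono_left hFq
  -- the usc condition along the ultrafilter
  have husc' : ∀ (x : X) (ν : (WeakDual ℝ X × ℝ) → WeakDual ℝ Z)
      (c : (WeakDual ℝ X × ℝ) → ℝ) (ν₀ : WeakDual ℝ Z) (c₀ : ℝ),
      Filter.Tendsto ν F (𝓝 ν₀) → Filter.Tendsto c F (𝓝 c₀) →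
      (∀ᶠ p in (F : Filter (WeakDual ℝ X × ℝ)),
        (∀ z ∈ S, 0 ≤ ν p z) ∧ c p ≤ ν p (G (κ p) x)) →
      ((∀ z ∈ S, 0 ≤ ν₀ z) ∧ c₀ ≤ ν₀ (G u₀ x)) := by
    intro x ν c ν₀ c₀ hν hc hev
    have htriple : Filter.Tendsto (fun p => (ν p, κ' p, c p)) F
        (𝓝 (ν₀, (⟨u₀, hu₀U⟩ : U), c₀)) :=
      hν.prodMk_nhds (hκ't.prodMk_nhds hc)
    have := (husc x).mem_of_tendsto htriple (by
      filter_upwards [hev] with p hp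
      exact ⟨hp.1, hp.2⟩)
    exact this
  -- dichotomy on boundedness of the multipliers
  by_cases hbdd : ∃ C : ℝ, {p : WeakDual ℝ X × ℝ | t p ≤ C} ∈ F
  · -- bounded case: multipliers converge, the limit certifies q ∈ M
    obtain ⟨C, hC⟩ := hbdd
    have hIcc : Set.Icc (1 : ℝ) (max 1 C) ∈ F.map t :=
      Filter.mem_map.mpr (Filter.mem_of_superset hC fun p hp =>
        ⟨ht1 p, le_trans hp (le_max_right 1 C)⟩)
    obtain ⟨t₀, ht₀mem, ht₀⟩ := isCompact_Icc.ultrafilter_le_nhds (F.map t)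
      (le_principal_iff.mpr hIcc)
    have htt : Filter.Tendsto t F (𝓝 t₀) := by rwa [Ultrafilter.coe_map] at ht₀
    set lam₀ : WeakDual ℝ Z := t₀ • μ₀ with hlam₀
    have hΛt : Filter.Tendsto Λ F (𝓝 lam₀) := by
      rw [tendsto_iff_forall_eval_tendsto_topDualPairing]
      intro z
      have h1 : Filter.Tendsto (fun p => μ p z) F (𝓝 (μ₀ z)) :=
        tendsto_iff_forall_eval_tendsto_topDualPairing.mp hμt z
      have h2 := htt.mul h1
      have heq : (fun p => t p * μ p z) = fun p => Λ p z := by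
        funext p
        rw [← hΛapp]
      rw [heq] at h2
      exact h2
    have hfin : ∀ x : X, (∀ z ∈ S, 0 ≤ lam₀ z) ∧ q.1 x - q.2 ≤ lam₀ (G u₀ x) := by
      intro x
      apply husc' x Λ (fun p => p.1 x - p.2) lam₀ (q.1 x - q.2) hΛt (hq1 x)
      filter_upwards [hMF] with p hp
      refine ⟨(hΛ p hp).1, ?_⟩
      have := (hΛ p hp).2 x
      linarith
    rw [hmemM]
    exact ⟨u₀, hu₀U, lam₀, (hfin 0).1, fun x => by have := (hfin x).2; linarith⟩
  · -- unbounded case: contradiction with the Slater condition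
    exfalso
    push_neg at hbdd
    have htop : Filter.Tendsto t F Filter.atTop := by
      rw [Filter.tendsto_atTop]
      intro b
      have hcompl : {p : WeakDual ℝ X × ℝ | t p ≤ b}ᶜ ∈ F :=
        Ultrafilter.compl_mem_iff_notMem.mpr (hbdd b)
      filter_upwards [hcompl] with p hp
      simp only [Set.mem_compl_iff, Set.mem_setOf_eq] at hp
      exact (not_le.mp hp).le
    have hinv : Filter.Tendsto (fun p => (t p)⁻¹) F (𝓝 0) :=
      tendsto_inv_atTop_zero.comp htop
    obtain ⟨x₀, hx₀⟩ := hSlater u₀ hu₀U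
    have hx₀' : -G u₀ x₀ ∈ interior S := by rwa [Set.mem_neg] at hx₀
    -- find c > 0 with -G u₀ x₀ - c • s₀ ∈ S
    obtain ⟨c, hcpos, hcS⟩ : ∃ c : ℝ, 0 < c ∧ -G u₀ x₀ - c • s₀ ∈ S := by
      have hcont : Continuous fun c : ℝ => -G u₀ x₀ - c • s₀ :=
        continuous_const.sub (continuous_id.smul continuous_const)
      have hmem0 : -G u₀ x₀ - (0 : ℝ) • s₀ ∈ interior S := by
        rw [zero_smul, sub_zero]; exact hx₀'
      have hnhds : (fun c : ℝ => -G u₀ x₀ - c • s₀) ⁻¹' interior S ∈ 𝓝 (0 : ℝ) :=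
        hcont.continuousAt.preimage_mem_nhds (isOpen_interior.mem_nhds hmem0)
      obtain ⟨δ, hδpos, hδ⟩ := Metric.mem_nhds_iff.mp hnhds
      refine ⟨δ / 2, by positivity, interior_subset (hδ ?_)⟩
      simp only [Metric.mem_ball, dist_zero_right, Real.norm_eq_abs]
      rw [abs_of_pos (by positivity)]
      linarith
    have hc0 : Filter.Tendsto (fun p : WeakDual ℝ X × ℝ => (t p)⁻¹ * (p.1 x₀ - p.2)) F
        (𝓝 0) := by
      have := hinv.mul (hq1 x₀)
      simpa using this
    have hres := husc' x₀ μ (fun p => (t p)⁻¹ * (p.1 x₀ - p.2)) μ₀ 0 hμt hc0 (by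
      filter_upwards [hMF] with p hp
      refine ⟨hμSp p hp, ?_⟩
      have h2 := (hΛ p hp).2 x₀
      rw [hμapp]
      have hle : p.1 x₀ - p.2 ≤ Λ p (G (κ p) x₀) := by linarith
      exact mul_le_mul_of_nonneg_left hle (inv_nonneg.mpr (htpos p).le))
    -- μ₀ s₀ = 1
    have hμs₀ : μ₀ s₀ = 1 := by
      have hev : ∀ᶠ p in (F : Filter (WeakDual ℝ X × ℝ)), μ p s₀ = 1 := by
        filter_upwards [htop.eventually_ge_atTop 2] with p hp
        have hΛs : t p = Λ p s₀ := by
          rcases max_cases 1 (Λ p s₀) with ⟨h1, h2⟩ | ⟨h1, h2⟩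
          · exfalso
            rw [ht] at hp
            simp only at hp
            rw [h1] at hp
            linarith
          · exact h1
        rw [hμapp, ← hΛs]
        field_simp
      have hlim : Filter.Tendsto (fun p => μ p s₀) F (𝓝 (μ₀ s₀)) :=
        tendsto_iff_forall_eval_tendsto_topDualPairing.mp hμt s₀
      have hone : Filter.Tendsto (fun p => μ p s₀) F (𝓝 1) :=
        Filter.Tendsto.congr' (by filter_upwards [hev] with p hp; exact hp.symm)
          tendsto_const_nhds
      exact tendsto_nhds_unique hlim hone
    have h1 : 0 ≤ μ₀ (G u₀ x₀) := hres.2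
    have h2 : 0 ≤ μ₀ (-G u₀ x₀ - c • s₀) := hres.1 _ hcS
    rw [map_sub, map_neg, map_smul, smul_eq_mul, hμs₀] at h2
    linarith
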